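/- Let c ∈ ℂ and define λ(t) = −20c·tanh(ct), where tanh is the complex hyperbolic tangent. Then for every t ∈ ℂ with cosh(ct) ≠ 0, one has 10·λ'''(t)·λ'(t) − 15·(λ''(t))² + 20c²·(λ'(t))² = 0. (Equivalently, on the set where λ'(t) ≠ 0, λ satisfies 5·λ'''/λ' − (15/2)·(λ'')²/(λ')² = −10c²; taking 10c² = α² + β², this shows that λ(t) = −2√(10(α²+β²))·tanh(t·√((α²+β²)/10)) is the change of variable bringing the ODE u⁗ − (α²+β²)u'' + α²β²u = 0 to Laguerre–Forsyth canonical form.) -/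

import Mathlib

open Complex

private lemma hds (c t : ℂ) :
    HasDerivAt (fun s => Complex.sinh (c * s)) (c * Complex.cosh (c * t)) t := by
  have h := (Complex.hasDerivAt_sinh (c * t)).comp t ((hasDerivAt_id t).const_mul c)
  exact h.congr_deriv (by simp [mul_comm])

private lemma hdc (c t : ℂ) :
    HasDerivAt (fun s => Complex.cosh (c * s)) (c * Complex.sinh (c * t)) t := by
  have h := (Complex.hasDerivAt_cosh (c * t)).comp t ((hasDerivAt_id t).const_mul c)
  exact h.congr_deriv (by simp [mul_comm])

/-- The change of variable `λ(t) = −20c·tanh(ct)` satisfies the ODE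
`10·λ'''·λ' − 15·(λ'')² + 20c²·(λ')² = 0` wherever `cosh(ct) ≠ 0`; equivalently,
`5·λ'''/λ' − (15/2)·(λ'')²/(λ')² = −10c²` where `λ' ≠ 0`.  Taking `10c² = α² + β²`,
this is the change of variable bringing `u⁗ − (α²+β²)u'' + α²β²u = 0` to
Laguerre–Forsyth canonical form. -/
theorem tanh_change_of_variable_laguerre_forsyth
    (c : ℂ) (lam : ℂ → ℂ) (hlam : ∀ t, lam t = -20 * c * Complex.tanh (c * t)) :
    ∀ t : ℂ, Complex.cosh (c * t) ≠ 0 →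
      10 * iteratedDeriv 3 lam t * deriv lam t - 15 * (iteratedDeriv 2 lam t) ^ 2
        + 20 * c ^ 2 * (deriv lam t) ^ 2 = 0 := by
  set S : Set ℂ := {t | Complex.cosh (c * t) ≠ 0} with hSdef
  have hS : IsOpen S := by
    have hcont : Continuous fun t : ℂ => Complex.cosh (c * t) :=
      Complex.continuous_cosh.comp (continuous_const.mul continuous_id)
    exact isOpen_ne.preimage hcont
  set f1 : ℂ → ℂ := fun t => -20 * c ^ 2 / Complex.cosh (c * t) ^ 2 with hf1
  set f2 : ℂ → ℂ := fun t => 40 * c ^ 3 * Complex.sinh (c * t) / Complex.cosh (c * t) ^ 3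
    with hf2
  set f3 : ℂ → ℂ := fun t =>
    40 * c ^ 4 * (Complex.cosh (c * t) ^ 2 - 3 * Complex.sinh (c * t) ^ 2)
      / Complex.cosh (c * t) ^ 4 with hf3
  -- first derivative
  have hd1 : ∀ t ∈ S, HasDerivAt lam (f1 t) t := by
    intro t ht
    have hne : Complex.cosh (c * t) ≠ 0 := ht
    have hfun : lam = fun s => -20 * c * (Complex.sinh (c * s) / Complex.cosh (c * s)) := by
      funext s; rw [hlam s, Complex.tanh_eq_sinh_div_cosh]
    rw [hfun]
    have hdiv := ((hds c t).div (hdc c t) hne).const_mul (-20 * c)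
    refine hdiv.congr_deriv ?_
    symm
    have hid := Complex.cosh_sq_sub_sinh_sq (c * t)
    simp only [hf1]
    field_simp
    linear_combination c ^ 2 * hid
  -- second derivative
  have hd2 : ∀ t ∈ S, HasDerivAt f1 (f2 t) t := by
    intro t ht
    have hne : Complex.cosh (c * t) ≠ 0 := ht
    have hne2 : Complex.cosh (c * t) ^ 2 ≠ 0 := pow_ne_zero _ hne
    have hsq : HasDerivAt (fun s => Complex.cosh (c * s) ^ 2)
        (2 * Complex.cosh (c * t) * (c * Complex.sinh (c * t))) t := by
      have := (hdc c t).pow 2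
      exact this.congr_deriv (by simp [mul_comm, mul_assoc, mul_left_comm])
    have hdiv := (hasDerivAt_const t (-20 * c ^ 2 : ℂ)).div hsq hne2
    refine hdiv.congr_deriv ?_
    symm
    simp only [hf2]
    field_simp
    ring
  -- third derivative
  have hd3 : ∀ t ∈ S, HasDerivAt f2 (f3 t) t := by
    intro t ht
    have hne : Complex.cosh (c * t) ≠ 0 := ht
    have hne3 : Complex.cosh (c * t) ^ 3 ≠ 0 := pow_ne_zero _ hne
    have hnum : HasDerivAt (fun s => 40 * c ^ 3 * Complex.sinh (c * s))
        (40 * c ^ 3 * (c * Complex.cosh (c * t))) t := (hds c t).const_mul _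
    have hcube : HasDerivAt (fun s => Complex.cosh (c * s) ^ 3)
        (3 * Complex.cosh (c * t) ^ 2 * (c * Complex.sinh (c * t))) t := by
      have := (hdc c t).pow 3
      exact this.congr_deriv (by simp [mul_comm, mul_assoc, mul_left_comm])
    have hdiv := hnum.div hcube hne3
    refine hdiv.congr_deriv ?_
    symm
    simp only [hf3]
    field_simp
  intro t ht
  have htS : t ∈ S := ht
  have hmem : S ∈ nhds t := hS.mem_nhds htS
  -- deriv lam equals f1 on S
  have hderiv1 : ∀ s ∈ S, deriv lam s = f1 s := fun s hs => (hd1 s hs).deriv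
  have hev1 : deriv lam =ᶠ[nhds t] f1 :=
    Filter.eventually_of_mem hmem (fun s hs => hderiv1 s hs)
  -- iteratedDeriv 2 equals f2 on S
  have hderiv2 : ∀ s ∈ S, iteratedDeriv 2 lam s = f2 s := by
    intro s hs
    have hevs : deriv lam =ᶠ[nhds s] f1 :=
      Filter.eventually_of_mem (hS.mem_nhds hs) (fun u hu => hderiv1 u hu)
    rw [iteratedDeriv_succ, iteratedDeriv_one, hevs.deriv_eq, (hd2 s hs).deriv]
  have hderiv3 : iteratedDeriv 3 lam t = f3 t := by
    have hev2 : iteratedDeriv 2 lam =ᶠ[nhds t] f2 :=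
      Filter.eventually_of_mem hmem (fun s hs => hderiv2 s hs)
    rw [iteratedDeriv_succ, hev2.deriv_eq, (hd3 t htS).deriv]
  rw [hderiv3, hderiv2 t htS, hderiv1 t htS]
  have hne : Complex.cosh (c * t) ≠ 0 := ht
  simp only [hf1, hf2, hf3]
  field_simp
  ring
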